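/- Let W be symmetric and D diagonal positive definite, with the pencil (W,D) having at least K positive eigenvalues and λ_K > λ_{K+1}. Then every local minimizer of f(Y) = (1/n²)trace(-2YᵀWY + (1/n²)YᵀDYYᵀDY) over Y ∈ ℝ^{n×K} has the form Y* = U_K Λ_K^{1/2} Q, where Λ_K is the diagonal matrix of the K largest eigenvalues of (W,D), U_K the corresponding eigenvector matrix with U_KᵀDU_K = n²I, and Q an arbitrary K×K orthogonal matrix. -/

import Mathlib

open Matrix Filter

private lemma locmin_poly {c1 c2 c3 c4 : ℝ}
    (h : ∀ᶠ t in nhds (0:ℝ), 0 ≤ c1*t + c2*t^2 + c3*t^3 + c4*t^4) : c1 = 0 ∧ 0 ≤ c2 := by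
  have hg : Continuous (fun t : ℝ => c1 + c2*t + c3*t^2 + c4*t^3) := by fun_prop
  have hform : ∀ t : ℝ, c1*t + c2*t^2 + c3*t^3 + c4*t^4
      = t * (c1 + c2*t + c3*t^2 + c4*t^3) := by intro t; ring
  have hc1 : c1 = 0 := by
    by_contra hc1
    rcases lt_or_gt_of_ne hc1 with hlt | hgt
    · have hev : ∀ᶠ t in nhds (0:ℝ), c1 + c2*t + c3*t^2 + c4*t^3 < 0 := by
        have := hg.tendsto 0
        norm_num at this
        exact this.eventually_lt_const hlt
      have hall : ∀ᶠ t in nhdsWithin (0:ℝ) (Set.Ioi 0),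
          (0 ≤ c1*t + c2*t^2 + c3*t^3 + c4*t^4) ∧ (c1 + c2*t + c3*t^2 + c4*t^3 < 0) ∧ 0 < t :=
        ((h.filter_mono nhdsWithin_le_nhds).and (hev.filter_mono nhdsWithin_le_nhds)).and
          self_mem_nhdsWithin |>.mono (by tauto)
      obtain ⟨t, h1, h2, h3⟩ := hall.exists
      rw [hform t] at h1; nlinarith
    · have hev : ∀ᶠ t in nhds (0:ℝ), 0 < c1 + c2*t + c3*t^2 + c4*t^3 := by
        have := hg.tendsto 0
        norm_num at this
        exact this.eventually_const_lt hgt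
      have hall : ∀ᶠ t in nhdsWithin (0:ℝ) (Set.Iio 0),
          (0 ≤ c1*t + c2*t^2 + c3*t^3 + c4*t^4) ∧ (0 < c1 + c2*t + c3*t^2 + c4*t^3) ∧ t < 0 :=
        ((h.filter_mono nhdsWithin_le_nhds).and (hev.filter_mono nhdsWithin_le_nhds)).and
          self_mem_nhdsWithin |>.mono (by tauto)
      obtain ⟨t, h1, h2, h3⟩ := hall.exists
      rw [hform t] at h1; nlinarith
  refine ⟨hc1, ?_⟩
  by_contra hc2
  push_neg at hc2
  have hg2 : Continuous (fun t : ℝ => c2 + c3*t + c4*t^2) := by fun_prop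
  have hev : ∀ᶠ t in nhds (0:ℝ), c2 + c3*t + c4*t^2 < 0 := by
    have := hg2.tendsto 0
    norm_num at this
    exact this.eventually_lt_const hc2
  have hall : ∀ᶠ t in nhdsWithin (0:ℝ) (Set.Ioi 0),
      (0 ≤ c1*t + c2*t^2 + c3*t^3 + c4*t^4) ∧ (c2 + c3*t + c4*t^2 < 0) ∧ 0 < t :=
    ((h.filter_mono nhdsWithin_le_nhds).and (hev.filter_mono nhdsWithin_le_nhds)).and
      self_mem_nhdsWithin |>.mono (by tauto)
  obtain ⟨t, h1, h2, h3⟩ := hall.exists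
  have heq : c1*t + c2*t^2 + c3*t^3 + c4*t^4 = t^2 * (c2 + c3*t + c4*t^2) + c1*t := by ring
  rw [heq, hc1] at h1
  nlinarith [mul_pos h3 h3]

section helpers
set_option linter.unusedSectionVars false

variable {m k l : Type*} [Fintype m] [Fintype k] [Fintype l] [DecidableEq m] [DecidableEq k]

private lemma mul_vecMulVec (A : Matrix l m ℝ) (v : m → ℝ) (w : k → ℝ) :
    A * vecMulVec v w = vecMulVec (A *ᵥ v) w := by
  ext i j
  simp [mul_apply, vecMulVec_apply, mulVec, dotProduct, Finset.sum_mul, mul_assoc]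

private lemma vecMulVec_mul_vecMulVec (a : m → ℝ) (b : k → ℝ) (c : k → ℝ) (d : m → ℝ) :
    vecMulVec a b * vecMulVec c d = (b ⬝ᵥ c) • vecMulVec a d := by
  ext i j
  simp only [mul_apply, vecMulVec_apply, Matrix.smul_apply, smul_eq_mul, dotProduct, Finset.sum_mul]
  apply Finset.sum_congr rfl
  intro x _; ring

private lemma trace_vecMulVec (a b : m → ℝ) : trace (vecMulVec a b) = a ⬝ᵥ b := by
  simp [trace, vecMulVec_apply, dotProduct, diag]

private lemma transpose_vecMulVec (a : m → ℝ) (b : k → ℝ) :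
    (vecMulVec a b)ᵀ = vecMulVec b a := by
  ext i j; simp [vecMulVec_apply, mul_comm]

private lemma trace_vecMulVec_mul (a b : m → ℝ) (C : Matrix m m ℝ) :
    trace (vecMulVec a b * C) = b ⬝ᵥ (C *ᵥ a) := by
  rw [trace_mul_comm, _root_.mul_vecMulVec C a b, _root_.trace_vecMulVec]
  simp [dotProduct, mul_comm]

private lemma eq_zero_of_trace_transpose_mul (G : Matrix m k ℝ)
    (h : ∀ V : Matrix m k ℝ, trace (Vᵀ * G) = 0) : G = 0 := by
  ext i j
  have := h (Matrix.single i j 1)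
  rw [show (Matrix.single i j (1:ℝ))ᵀ = Matrix.single j i 1 by
    ext a b; simp [Matrix.single, Matrix.transpose_apply, and_comm]] at this
  rw [show trace (Matrix.single j i (1:ℝ) * G) = G i j from ?_] at this
  · simpa using this
  · simp [trace, mul_apply, Matrix.single, diag, ite_and]

end helpers

private lemma quad_expand {n K : ℕ} (B : Matrix (Fin n) (Fin n) ℝ)
    (Y V : Matrix (Fin n) (Fin K) ℝ) (t : ℝ) :
    (Y + t•V)ᵀ * B * (Y + t•V)
      = Yᵀ*B*Y + t•(Yᵀ*B*V + Vᵀ*B*Y) + (t^2)•(Vᵀ*B*V) := by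
  rw [transpose_add, transpose_smul]
  simp only [Matrix.add_mul, Matrix.mul_add, Matrix.smul_mul, Matrix.mul_smul, smul_add, smul_smul]
  rw [sq]
  abel

private lemma trace_sq_expand {K : ℕ} (P Q R : Matrix (Fin K) (Fin K) ℝ) (t : ℝ) :
    trace ((P + t•Q + (t^2)•R) * (P + t•Q + (t^2)•R)) =
      trace (P*P) + (trace (P*Q) + trace (Q*P))*t
      + (trace (P*R) + trace (R*P) + trace (Q*Q))*t^2
      + (trace (Q*R) + trace (R*Q))*t^3 + trace (R*R)*t^4 := by
  simp only [Matrix.add_mul, Matrix.mul_add, Matrix.smul_mul, Matrix.mul_smul, smul_smul,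
    trace_add, trace_smul, smul_eq_mul]
  ring

private lemma trace_sym_swap {n K : ℕ} (B : Matrix (Fin n) (Fin n) ℝ)
    (Y V : Matrix (Fin n) (Fin K) ℝ) :
    trace (Yᵀ*B*V) = trace (Vᵀ*(Bᵀ*Y)) := by
  conv_lhs => rw [← trace_transpose]
  rw [transpose_mul, transpose_mul, transpose_transpose]

private lemma trace_A_YBV {n K : ℕ} (B : Matrix (Fin n) (Fin n) ℝ) (hB : Bᵀ = B)
    (Y V : Matrix (Fin n) (Fin K) ℝ) (A : Matrix (Fin K) (Fin K) ℝ) (hA : Aᵀ = A) :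
    trace (A*(Yᵀ*B*V)) = trace (Vᵀ*(B*Y*A)) := by
  conv_lhs => rw [← trace_transpose]
  rw [transpose_mul, transpose_mul, transpose_mul, transpose_transpose, hA, hB]
  simp only [Matrix.mul_assoc]

private lemma trace_A_VBY {n K : ℕ} (B : Matrix (Fin n) (Fin n) ℝ)
    (Y V : Matrix (Fin n) (Fin K) ℝ) (A : Matrix (Fin K) (Fin K) ℝ) :
    trace (A*(Vᵀ*B*Y)) = trace (Vᵀ*(B*Y*A)) := by
  rw [trace_mul_comm]
  simp only [Matrix.mul_assoc]

private lemma sum_split {n K : ℕ} (hKn : K ≤ n) (f : Fin n → ℝ)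
    (hf : ∀ b : Fin n, K ≤ (b:ℕ) → f b = 0) :
    ∑ b : Fin n, f b = ∑ c : Fin K, f (Fin.castLE hKn c) := by
  have himg : Finset.image (Fin.castLE hKn) Finset.univ
      = Finset.univ.filter (fun b : Fin n => (b:ℕ) < K) := by
    ext b
    simp only [Finset.mem_image, Finset.mem_univ, true_and, Finset.mem_filter]
    constructor
    · rintro ⟨c, rfl⟩; exact c.isLt
    · intro hb; exact ⟨⟨(b:ℕ), hb⟩, by ext; simp⟩
  have h1 : ∑ b ∈ Finset.univ.filter (fun b : Fin n => (b:ℕ) < K), f b = ∑ b : Fin n, f b := by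
    apply Finset.sum_subset (Finset.filter_subset _ _)
    intro x _ hx
    exact hf x (le_of_not_gt (by simpa using hx))
  rw [← h1, ← himg, Finset.sum_image]
  intro a _ b _ h
  exact Fin.castLE_injective hKn h
set_option maxHeartbeats 2000000 in
theorem stmt_2 (n K : ℕ) (hn : 0 < n) (hKn : K < n)
    (W D : Matrix (Fin n) (Fin n) ℝ) (hW : W.IsSymm) (hDdiag : D.IsDiag)
    (hDpos : D.PosDef)
    (lam : Fin n → ℝ) (Ufull : Matrix (Fin n) (Fin n) ℝ)
    (hEig : W * Ufull = D * Ufull * diagonal lam)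
    (hOrth : Ufullᵀ * D * Ufull = ((n : ℝ) ^ 2) • (1 : Matrix (Fin n) (Fin n) ℝ))
    (hsort : ∀ i j : Fin n, i ≤ j → lam j ≤ lam i)
    (hpos : ∀ i : Fin n, (i : ℕ) < K → 0 < lam i)
    (hgap : ∀ i j : Fin n, (i : ℕ) < K → K ≤ (j : ℕ) → lam j < lam i)
    (Y : Matrix (Fin n) (Fin K) ℝ)
    (hmin : IsLocalMin (fun Z : Matrix (Fin n) (Fin K) ℝ =>
      ((n : ℝ) ^ 2)⁻¹ * (trace ((-2 : ℝ) • (Zᵀ * W * Z))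
        + ((n : ℝ) ^ 2)⁻¹ * trace (Zᵀ * D * Z * (Zᵀ * D * Z)))) Y) :
    ∃ Q : Matrix (Fin K) (Fin K) ℝ, Qᵀ * Q = 1 ∧ Q * Qᵀ = 1 ∧
      Y = Ufull.submatrix id (Fin.castLE hKn.le)
        * diagonal (fun i : Fin K => Real.sqrt (lam (Fin.castLE hKn.le i))) * Q := by
  classical
  have hDsymm : Dᵀ = D := hDdiag.isSymm
  have hWsymm : Wᵀ = W := hW
  have hn2 : ((n:ℝ)^2) ≠ 0 := pow_ne_zero 2 (Nat.cast_ne_zero.mpr hn.ne')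
  set s : ℝ := ((n:ℝ)^2)⁻¹ with hs_def
  have hsn : s * ((n:ℝ)^2) = 1 := inv_mul_cancel₀ hn2
  have hs0 : s ≠ 0 := by
    intro h; rw [h, zero_mul] at hsn; exact zero_ne_one hsn
  have hPsymm : (Yᵀ*D*Y)ᵀ = Yᵀ*D*Y := by
    rw [transpose_mul, transpose_mul, transpose_transpose, hDsymm, Matrix.mul_assoc]
  -- Step 1: first and second order conditions along every direction V
  have hkey : ∀ V : Matrix (Fin n) (Fin K) ℝ,
      (s*(-2*(trace (Yᵀ*W*V) + trace (Vᵀ*W*Y))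
          + s*(trace ((Yᵀ*D*Y)*(Yᵀ*D*V + Vᵀ*D*Y)) + trace ((Yᵀ*D*V + Vᵀ*D*Y)*(Yᵀ*D*Y)))) = 0)
      ∧ (0 ≤ s*(-2*trace (Vᵀ*W*V)
          + s*(trace ((Yᵀ*D*Y)*(Vᵀ*D*V)) + trace ((Vᵀ*D*V)*(Yᵀ*D*Y))
            + trace ((Yᵀ*D*V + Vᵀ*D*Y)*(Yᵀ*D*V + Vᵀ*D*Y))))) := by
    intro V
    apply locmin_poly (c3 := s*(s*(trace ((Yᵀ*D*V + Vᵀ*D*Y)*(Vᵀ*D*V))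
        + trace ((Vᵀ*D*V)*(Yᵀ*D*V + Vᵀ*D*Y)))))
      (c4 := s*(s*trace ((Vᵀ*D*V)*(Vᵀ*D*V))))
    have htend : Filter.Tendsto (fun t : ℝ => Y + t•V) (nhds 0) (nhds Y) := by
      have hc : Continuous (fun t : ℝ => Y + t•V) := by fun_prop
      have h0 : Y + (0:ℝ)•V = Y := by simp
      simpa [h0] using hc.tendsto 0
    filter_upwards [htend.eventually hmin] with t ht
    have hexp : s * (trace ((-2:ℝ) • ((Y+t•V)ᵀ*W*(Y+t•V)))
          + s * trace ((Y+t•V)ᵀ*D*(Y+t•V)*((Y+t•V)ᵀ*D*(Y+t•V))))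
        = s * (trace ((-2:ℝ) • (Yᵀ*W*Y)) + s * trace ((Yᵀ*D*Y)*(Yᵀ*D*Y)))
          + (s*(-2*(trace (Yᵀ*W*V) + trace (Vᵀ*W*Y))
              + s*(trace ((Yᵀ*D*Y)*(Yᵀ*D*V + Vᵀ*D*Y)) + trace ((Yᵀ*D*V + Vᵀ*D*Y)*(Yᵀ*D*Y)))))*t
          + (s*(-2*trace (Vᵀ*W*V)
              + s*(trace ((Yᵀ*D*Y)*(Vᵀ*D*V)) + trace ((Vᵀ*D*V)*(Yᵀ*D*Y))
                + trace ((Yᵀ*D*V + Vᵀ*D*Y)*(Yᵀ*D*V + Vᵀ*D*Y)))))*t^2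
          + (s*(s*(trace ((Yᵀ*D*V + Vᵀ*D*Y)*(Vᵀ*D*V))
              + trace ((Vᵀ*D*V)*(Yᵀ*D*V + Vᵀ*D*Y)))))*t^3
          + (s*(s*trace ((Vᵀ*D*V)*(Vᵀ*D*V))))*t^4 := by
      rw [quad_expand W Y V t, quad_expand D Y V t, trace_sq_expand]
      simp only [trace_smul, trace_add, smul_eq_mul]
      ring
    rw [hexp] at ht
    linarith
  -- Step 2: Euler equation  W*Y = s • (D*Y*(Yᵀ*D*Y))
  have hEuler : W*Y = s•(D*Y*(Yᵀ*D*Y)) := by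
    have hzero : s•(D*Y*(Yᵀ*D*Y)) - W*Y = 0 := by
      apply eq_zero_of_trace_transpose_mul
      intro V
      have h1 := (hkey V).1
      rw [Matrix.mul_add, trace_add, Matrix.add_mul, trace_add] at h1
      rw [trace_A_YBV D hDsymm Y V (Yᵀ*D*Y) hPsymm] at h1
      rw [trace_A_VBY D Y V (Yᵀ*D*Y)] at h1
      rw [trace_mul_comm (Yᵀ*D*V) (Yᵀ*D*Y),
        trace_A_YBV D hDsymm Y V (Yᵀ*D*Y) hPsymm] at h1
      rw [trace_mul_comm (Vᵀ*D*Y) (Yᵀ*D*Y),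
        trace_A_VBY D Y V (Yᵀ*D*Y)] at h1
      rw [trace_sym_swap W Y V, hWsymm, ← Matrix.mul_assoc Vᵀ W Y] at h1
      rw [Matrix.mul_sub, trace_sub, Matrix.mul_smul, trace_smul, smul_eq_mul]
      have h2 : (4*s) * (s * trace (Vᵀ*(D*Y*(Yᵀ*D*Y))) - trace (Vᵀ*W*Y)) = 0 := by
        linear_combination h1
      rw [← Matrix.mul_assoc Vᵀ W Y]
      rcases mul_eq_zero.mp h2 with h | h
      · exact absurd (by linarith : s = 0) hs0
      · exact h
    exact (sub_eq_zero.mp hzero).symm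
  -- Step 3: orthogonality facts for Ufull and definition of Z
  have hUl : (s•(Ufullᵀ*D)) * Ufull = 1 := by
    calc (s•(Ufullᵀ*D)) * Ufull = s•(Ufullᵀ*D*Ufull) := by rw [Matrix.smul_mul]
    _ = s•(((n:ℝ)^2)•(1 : Matrix (Fin n) (Fin n) ℝ)) := by rw [hOrth]
    _ = 1 := by rw [smul_smul, hsn, one_smul]
  have hUr : Ufull * (s•(Ufullᵀ*D)) = 1 := mul_eq_one_comm.mp hUl
  have hUDU : Ufull * (Ufullᵀ*D) = ((n:ℝ)^2)•(1 : Matrix (Fin n) (Fin n) ℝ) := by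
    have h1 := hUr
    rw [Matrix.mul_smul] at h1
    calc Ufull*(Ufullᵀ*D) = ((n:ℝ)^2)•(s•(Ufull*(Ufullᵀ*D))) := by
          rw [smul_smul, mul_comm ((n:ℝ)^2) s, hsn, one_smul]
    _ = ((n:ℝ)^2)•(1 : Matrix (Fin n) (Fin n) ℝ) := by rw [h1]
  have hUU : ∀ (X : Matrix (Fin n) (Fin K) ℝ),
      Ufull*(Ufullᵀ*(D*X)) = ((n:ℝ)^2)•X := by
    intro X
    have h1 : Ufull*(Ufullᵀ*(D*X)) = (Ufull*(Ufullᵀ*D))*X := by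
      simp only [Matrix.mul_assoc]
    rw [h1, hUDU, Matrix.smul_mul, Matrix.one_mul]
  have hUtU : ∀ (X : Matrix (Fin n) (Fin K) ℝ),
      Ufullᵀ*(D*(Ufull*X)) = ((n:ℝ)^2)•X := by
    intro X
    have h1 : Ufullᵀ*(D*(Ufull*X)) = (Ufullᵀ*D*Ufull)*X := by
      simp only [Matrix.mul_assoc]
    rw [h1, hOrth, Matrix.smul_mul, Matrix.one_mul]
  set Z := s•(Ufullᵀ*(D*Y)) with hZ_def
  have hYZ : Ufull * Z = Y := by
    rw [hZ_def, Matrix.mul_smul, hUU Y, smul_smul, hsn, one_smul]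
  have hZt : Zᵀ = s•(Yᵀ*(D*Ufull)) := by
    rw [hZ_def, transpose_smul]
    congr 1
    rw [transpose_mul, transpose_mul, transpose_transpose, hDsymm, Matrix.mul_assoc]
  have hZtZ : Zᵀ*Z = s•(Yᵀ*(D*Y)) := by
    rw [hZt, hZ_def, Matrix.smul_mul, Matrix.mul_smul, smul_smul]
    have h1 : Yᵀ*(D*Ufull)*(Ufullᵀ*(D*Y)) = Yᵀ*(D*(Ufull*(Ufullᵀ*(D*Y)))) := by
      simp only [Matrix.mul_assoc]
    rw [h1, hUU Y, Matrix.mul_smul, Matrix.mul_smul, smul_smul]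
    congr 1
    rw [mul_assoc, hsn, mul_one]
  have hWU : Ufullᵀ*W = diagonal lam*(Ufullᵀ*D) := by
    have h1 := congrArg transpose hEig
    rw [transpose_mul, transpose_mul, transpose_mul, diagonal_transpose, hWsymm, hDsymm] at h1
    exact h1
  have hC1Z : diagonal lam * Z = Z * (Zᵀ*Z) := by
    have e1 : diagonal lam * Z = s • ((diagonal lam*(Ufullᵀ*D))*Y) := by
      rw [hZ_def, Matrix.mul_smul]
      congr 1
      simp only [Matrix.mul_assoc]
    have e2 : Z * (Zᵀ*Z) = (s*s) • ((Ufullᵀ*(D*Y))*(Yᵀ*(D*Y))) := by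
      rw [hZtZ, hZ_def, Matrix.smul_mul, Matrix.mul_smul, smul_smul]
    rw [e1, e2, ← hWU]
    have e3 : Ufullᵀ*W*Y = Ufullᵀ*(W*Y) := Matrix.mul_assoc _ _ _
    rw [e3, hEuler, Matrix.mul_smul, smul_smul]
    congr 1
    simp only [Matrix.mul_assoc]
  have hP2 : (Yᵀ*D*Y) = ((n:ℝ)^2)•(Zᵀ*Z) := by
    calc Yᵀ*D*Y = Yᵀ*(D*Y) := Matrix.mul_assoc _ _ _
    _ = ((n:ℝ)^2)•(s•(Yᵀ*(D*Y))) := by rw [smul_smul, mul_comm, hsn, one_smul]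
    _ = ((n:ℝ)^2)•(Zᵀ*Z) := by rw [← hZtZ]
  -- Step 4: second-order condition in Z-coordinates
  have hC2 : ∀ (v : Fin n → ℝ) (w : Fin K → ℝ), Zᵀ *ᵥ v = 0 →
      (w ⬝ᵥ w) * (v ⬝ᵥ (diagonal lam *ᵥ v)) ≤ (v ⬝ᵥ v) * ((Z *ᵥ w) ⬝ᵥ (Z *ᵥ w)) := by
    intro v w hv
    set N : Matrix (Fin n) (Fin K) ℝ := vecMulVec v w with hN_def
    have h2 := (hkey (Ufull * N)).2
    have hYDV : Yᵀ*D*(Ufull*N) = 0 := by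
      have e1 : Yᵀ*D*(Ufull*N) = (Yᵀ*(D*Ufull))*N := by simp only [Matrix.mul_assoc]
      have e2 : Yᵀ*(D*Ufull) = ((n:ℝ)^2)•Zᵀ := by
        calc Yᵀ*(D*Ufull) = ((n:ℝ)^2)•(s•(Yᵀ*(D*Ufull))) := by
              rw [smul_smul, mul_comm, hsn, one_smul]
        _ = ((n:ℝ)^2)•Zᵀ := by rw [← hZt]
      rw [e1, e2, Matrix.smul_mul, hN_def, _root_.mul_vecMulVec]
      have e3 : Zᵀ *ᵥ v = (0 : Fin K → ℝ) := hv
      rw [e3]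
      have e4 : vecMulVec (0 : Fin K → ℝ) w = 0 := by ext i j; simp [vecMulVec_apply]
      rw [e4, smul_zero]
    have hVDY : (Ufull*N)ᵀ*D*Y = 0 := by
      have e1 : (Yᵀ*D*(Ufull*N))ᵀ = (Ufull*N)ᵀ*D*Y := by
        simp only [transpose_mul, transpose_transpose, hDsymm, Matrix.mul_assoc]
      rw [← e1, hYDV, transpose_zero]
    rw [hYDV, hVDY] at h2
    have hVWV : trace ((Ufull*N)ᵀ*W*(Ufull*N))
        = ((n:ℝ)^2) * ((v ⬝ᵥ (diagonal lam *ᵥ v)) * (w ⬝ᵥ w)) := by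
      have e1 : (Ufull*N)ᵀ*W*(Ufull*N) = Nᵀ*(Ufullᵀ*(W*(Ufull*N))) := by
        rw [transpose_mul]; simp only [Matrix.mul_assoc]
      have e2 : W*(Ufull*N) = D*(Ufull*(diagonal lam*N)) := by
        rw [← Matrix.mul_assoc, hEig]; simp only [Matrix.mul_assoc]
      rw [e1, e2, hUtU (diagonal lam*N), Matrix.mul_smul, trace_smul, smul_eq_mul]
      congr 1
      rw [hN_def, _root_.mul_vecMulVec, _root_.transpose_vecMulVec, _root_.vecMulVec_mul_vecMulVec,
        trace_smul, _root_.trace_vecMulVec, smul_eq_mul]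
    have hVDV : (Ufull*N)ᵀ*D*(Ufull*N) = ((n:ℝ)^2)•((v ⬝ᵥ v) • vecMulVec w w) := by
      have e1 : (Ufull*N)ᵀ*D*(Ufull*N) = Nᵀ*(Ufullᵀ*(D*(Ufull*N))) := by
        rw [transpose_mul]; simp only [Matrix.mul_assoc]
      rw [e1, hUtU N, Matrix.mul_smul]
      congr 1
      rw [hN_def, _root_.transpose_vecMulVec, _root_.vecMulVec_mul_vecMulVec]
    have hPR : trace ((Yᵀ*D*Y)*((Ufull*N)ᵀ*D*(Ufull*N)))
        = ((n:ℝ)^2)*((n:ℝ)^2)*((v ⬝ᵥ v) * ((Z*ᵥw)⬝ᵥ(Z*ᵥw))) := by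
      rw [hVDV, Matrix.mul_smul, trace_smul, Matrix.mul_smul, trace_smul, smul_eq_mul, smul_eq_mul]
      rw [trace_mul_comm, trace_vecMulVec_mul]
      rw [hP2, smul_mulVec, dotProduct_smul, smul_eq_mul]
      rw [← mulVec_mulVec, dotProduct_mulVec w Zᵀ, vecMul_transpose]
      ring
    have hRP : trace (((Ufull*N)ᵀ*D*(Ufull*N))*(Yᵀ*D*Y))
        = ((n:ℝ)^2)*((n:ℝ)^2)*((v ⬝ᵥ v) * ((Z*ᵥw)⬝ᵥ(Z*ᵥw))) := by
      rw [trace_mul_comm]; exact hPR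
    rw [hVWV, hPR, hRP] at h2
    simp only [add_zero, Matrix.zero_mul, trace_zero] at h2
    have e : s*(-2*(((n:ℝ)^2) * ((v ⬝ᵥ (diagonal lam *ᵥ v)) * (w ⬝ᵥ w)))
        + s*(((n:ℝ)^2)*((n:ℝ)^2)*((v ⬝ᵥ v) * ((Z*ᵥw)⬝ᵥ(Z*ᵥw)))
          + ((n:ℝ)^2)*((n:ℝ)^2)*((v ⬝ᵥ v) * ((Z*ᵥw)⬝ᵥ(Z*ᵥw)))))
        = -2*((v ⬝ᵥ (diagonal lam *ᵥ v)) * (w ⬝ᵥ w))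
          + 2*((v ⬝ᵥ v) * ((Z*ᵥw)⬝ᵥ(Z*ᵥw))) := by
      linear_combination (-2*((v ⬝ᵥ (diagonal lam *ᵥ v)) * (w ⬝ᵥ w))
        + 2*((v ⬝ᵥ v) * ((Z*ᵥw)⬝ᵥ(Z*ᵥw)))*(s*((n:ℝ)^2)+1))*hsn
    rw [e] at h2
    linarith
  -- Step 5: structure of M = Z Zᵀ
  set M := Z * Zᵀ with hM_def
  have hMsym : Mᵀ = M := by rw [hM_def, transpose_mul, transpose_transpose]
  have hMM : M*M = diagonal lam * M := by
    rw [hM_def]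
    calc Z*Zᵀ*(Z*Zᵀ) = (Z*(Zᵀ*Z))*Zᵀ := by simp only [Matrix.mul_assoc]
    _ = (diagonal lam * Z)*Zᵀ := by rw [← hC1Z]
    _ = diagonal lam * (Z*Zᵀ) := by simp only [Matrix.mul_assoc]
  have hMl : M*(diagonal lam) = diagonal lam*M := by
    have h1 : (diagonal lam * M)ᵀ = M * diagonal lam := by
      rw [transpose_mul, diagonal_transpose, hMsym]
    rw [← h1, ← hMM, transpose_mul, hMsym]
  have hblock : ∀ i j : Fin n, lam i ≠ lam j → M i j = 0 := by
    intro i j hij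
    have h1 : (diagonal lam * M) i j = lam i * M i j := by rw [Matrix.diagonal_mul]
    have h2 : (M * diagonal lam) i j = M i j * lam j := by rw [Matrix.mul_diagonal]
    have h3 : lam i * M i j = M i j * lam j := by rw [← h1, ← h2, hMl]
    have h4 : M i j * (lam i - lam j) = 0 := by linear_combination h3
    exact (mul_eq_zero.mp h4).resolve_right (sub_ne_zero.mpr hij)
  have hMentry : ∀ i j : Fin n, M i j = ∑ k : Fin K, Z i k * Z j k := by
    intro i j; rw [hM_def]; simp [mul_apply, transpose_apply]
  have hMvec : ∀ x : Fin n → ℝ, M *ᵥ x = 0 → Zᵀ *ᵥ x = 0 := by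
    intro x hx
    apply dotProduct_self_eq_zero.mp
    have h2 : x ⬝ᵥ (M *ᵥ x) = 0 := by rw [hx, dotProduct_zero]
    rw [hM_def, ← mulVec_mulVec, dotProduct_mulVec, ← mulVec_transpose] at h2
    exact h2
  have hdot_nonneg : ∀ {m : ℕ} (x : Fin m → ℝ), 0 ≤ x ⬝ᵥ x := by
    intro m x; exact Finset.sum_nonneg fun i _ => mul_self_nonneg (x i)
  have hdot_pos : ∀ {m : ℕ} (x : Fin m → ℝ), x ≠ 0 → 0 < x ⬝ᵥ x := by
    intro m x hx
    rcases (hdot_nonneg x).lt_or_eq with h | h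
    · exact h
    · exact absurd (dotProduct_self_eq_zero.mp h.symm) hx
  -- injectivity of Z on vectors
  have hZinj : ∀ u : Fin K → ℝ, Z *ᵥ u = 0 → u = 0 := by
    intro u hw
    by_contra hw0
    have hZ1w : (Z.submatrix (Fin.castLE hKn.le) id) *ᵥ u = 0 := by
      ext c
      have h0 : (Z *ᵥ u) (Fin.castLE hKn.le c) = 0 := by rw [hw]; rfl
      simpa [mulVec, dotProduct, submatrix_apply] using h0
    have hdet : (Z.submatrix (Fin.castLE hKn.le) id).det = 0 :=
      Matrix.exists_mulVec_eq_zero_iff.mp ⟨u, hw0, hZ1w⟩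
    have hdetT : ((Z.submatrix (Fin.castLE hKn.le) id)ᵀ).det = 0 := by
      rw [Matrix.det_transpose]; exact hdet
    obtain ⟨v', hv'0, hv'⟩ := Matrix.exists_mulVec_eq_zero_iff.mpr hdetT
    set v : Fin n → ℝ := fun i => if h : (i:ℕ) < K then v' ⟨(i:ℕ), h⟩ else 0 with hv_def
    have hvcast : ∀ c : Fin K, v (Fin.castLE hKn.le c) = v' c := by
      intro c
      have hlt : ((Fin.castLE hKn.le c : Fin n) : ℕ) < K := c.isLt
      rw [hv_def]
      simp only [dif_pos hlt]
      exact congrArg v' (Fin.ext (by simp))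
    have hvsupp : ∀ i : Fin n, K ≤ (i:ℕ) → v i = 0 := by
      intro i hi; rw [hv_def]; simp only [dif_neg (Nat.not_lt.mpr hi)]
    have hvne : v ≠ 0 := by
      obtain ⟨c, hc⟩ := Function.ne_iff.mp hv'0
      intro h
      apply hc
      rw [← hvcast c, h]; rfl
    have hvZ : Zᵀ *ᵥ v = 0 := by
      ext k
      have hsum : (Zᵀ *ᵥ v) k = ∑ i : Fin n, Z i k * v i := by
        simp [mulVec, dotProduct, transpose_apply]
      rw [hsum, sum_split hKn.le _ (fun b hb => by rw [hvsupp b hb, mul_zero])]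
      have h1 : ∑ c : Fin K, Z (Fin.castLE hKn.le c) k * v (Fin.castLE hKn.le c)
          = ((Z.submatrix (Fin.castLE hKn.le) id)ᵀ *ᵥ v') k := by
        simp [mulVec, dotProduct, transpose_apply, submatrix_apply, hvcast]
      rw [h1, hv']
    have h2 := hC2 v u hvZ
    rw [hw] at h2
    have hZw0 : (0 : Fin n → ℝ) ⬝ᵥ (0 : Fin n → ℝ) = 0 := by simp
    rw [hZw0, mul_zero] at h2
    have hvl : 0 < v ⬝ᵥ (diagonal lam *ᵥ v) := by
      have hform : v ⬝ᵥ (diagonal lam *ᵥ v) = ∑ i : Fin n, v i * (lam i * v i) := by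
        simp [dotProduct, mulVec_diagonal]
      rw [hform]
      apply Finset.sum_pos'
      · intro i _
        by_cases hi : (i:ℕ) < K
        · have hl := hpos i hi
          have h5 : v i * (lam i * v i) = lam i * (v i * v i) := by ring
          rw [h5]
          exact mul_nonneg hl.le (mul_self_nonneg _)
        · rw [hvsupp i (Nat.not_lt.mp hi)]; simp
      · obtain ⟨c, hc⟩ := Function.ne_iff.mp hv'0
        refine ⟨Fin.castLE hKn.le c, Finset.mem_univ _, ?_⟩
        rw [hvcast c]
        have hlt : ((Fin.castLE hKn.le c : Fin n) : ℕ) < K := c.isLt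
        have hl := hpos _ hlt
        have hsq : 0 < v' c * v' c := by
          rcases hc.lt_or_gt with h | h
          · exact mul_pos_of_neg_of_neg h h
          · exact mul_pos h h
        have h5 : v' c * (lam (Fin.castLE hKn.le c) * v' c)
            = lam (Fin.castLE hKn.le c) * (v' c * v' c) := by ring
        rw [h5]
        exact mul_pos hl hsq
    nlinarith [hdot_pos u hw0, mul_pos (hdot_pos u hw0) hvl]
  have hMsymE : ∀ a b : Fin n, M a b = M b a := by
    intro a b
    conv_lhs => rw [← hMsym]
    rfl
  have hcross : ∀ (i j : Fin n), (i:ℕ) < K → K ≤ (j:ℕ) → M i j = 0 ∧ M j i = 0 := by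
    intro i j hi hj
    have hne : lam j ≠ lam i := ne_of_lt (hgap i j hi hj)
    exact ⟨hblock i j hne.symm, hblock j i hne⟩
  have hMdiag_nonneg : ∀ j : Fin n, 0 ≤ M j j := by
    intro j; rw [hMentry]
    exact Finset.sum_nonneg fun k _ => mul_self_nonneg _
  -- contradiction from a top-supported kernel vector and a nonzero bottom diagonal entry
  have contra_top : ∀ (j₀ : Fin n), K ≤ (j₀:ℕ) → M j₀ j₀ ≠ 0 →
      ∀ v : Fin n → ℝ, (∀ i : Fin n, K ≤ (i:ℕ) → v i = 0) → v ≠ 0 → Zᵀ *ᵥ v = 0 → False := by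
    intro j₀ hj₀ hMj₀ v hsupp hvne hvZ
    set w : Fin K → ℝ := fun k => Z j₀ k with hw_def
    have hww : w ⬝ᵥ w = M j₀ j₀ := by
      rw [hMentry]; simp [dotProduct, hw_def]
    have hZw : Z *ᵥ w = fun i => M i j₀ := by
      ext i; rw [hMentry]; simp [mulVec, dotProduct, hw_def]
    have hZwZw : (Z *ᵥ w) ⬝ᵥ (Z *ᵥ w) = lam j₀ * M j₀ j₀ := by
      rw [hZw]
      have h1 : (fun i => M i j₀) ⬝ᵥ (fun i => M i j₀) = (M*M) j₀ j₀ := by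
        simp only [mul_apply, dotProduct]
        apply Finset.sum_congr rfl
        intro i _
        rw [hMsymE j₀ i]
      rw [h1, hMM, Matrix.diagonal_mul]
    have h2 := hC2 v w hvZ
    rw [hww, hZwZw] at h2
    have hMpos : 0 < M j₀ j₀ := (hMdiag_nonneg j₀).lt_of_ne (Ne.symm hMj₀)
    have hvpos := hdot_pos v hvne
    have hkeyv : lam j₀ * (v ⬝ᵥ v) < v ⬝ᵥ (diagonal lam *ᵥ v) := by
      have hform : v ⬝ᵥ (diagonal lam *ᵥ v) = ∑ i : Fin n, v i * (lam i * v i) := by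
        simp [dotProduct, mulVec_diagonal]
      have hform2 : lam j₀ * (v ⬝ᵥ v) = ∑ i : Fin n, lam j₀ * (v i * v i) := by
        rw [dotProduct, Finset.mul_sum]
      rw [hform, hform2]
      apply Finset.sum_lt_sum
      · intro i _
        by_cases hi : (i:ℕ) < K
        · have hg := hgap i j₀ hi hj₀
          nlinarith [mul_self_nonneg (v i)]
        · rw [hsupp i (le_of_not_gt hi)]; simp
      · obtain ⟨i, hvi⟩ := Function.ne_iff.mp hvne
        have hvi' : v i ≠ 0 := hvi
        have hiK : (i:ℕ) < K := by
          by_contra h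
          exact hvi' (hsupp i (le_of_not_gt h))
        refine ⟨i, Finset.mem_univ _, ?_⟩
        have hg := hgap i j₀ hiK hj₀
        have hsq : 0 < v i * v i := by
          rcases hvi'.lt_or_gt with h | h
          · exact mul_pos_of_neg_of_neg h h
          · exact mul_pos h h
        nlinarith
    nlinarith [mul_lt_mul_of_pos_left hkeyv hMpos]
  -- padding construction for kernel vectors of the top block
  have hpad : ∀ v' : Fin K → ℝ, v' ≠ 0 →
      ((M.submatrix (Fin.castLE hKn.le) (Fin.castLE hKn.le)) *ᵥ v' = 0) →
      ∃ v : Fin n → ℝ, (∀ i : Fin n, K ≤ (i:ℕ) → v i = 0) ∧ v ≠ 0 ∧ M *ᵥ v = 0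
        ∧ (∀ c : Fin K, v (Fin.castLE hKn.le c) = v' c) := by
    intro v' hv'0 hv'
    set v : Fin n → ℝ := fun i => if h : (i:ℕ) < K then v' ⟨(i:ℕ), h⟩ else 0 with hv_def
    have hvcast : ∀ c : Fin K, v (Fin.castLE hKn.le c) = v' c := by
      intro c
      have hlt : ((Fin.castLE hKn.le c : Fin n) : ℕ) < K := c.isLt
      rw [hv_def]
      simp only [dif_pos hlt]
      exact congrArg v' (Fin.ext (by simp))
    have hvsupp : ∀ i : Fin n, K ≤ (i:ℕ) → v i = 0 := by
      intro i hi; rw [hv_def]; simp only [dif_neg (Nat.not_lt.mpr hi)]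
    have hvne : v ≠ 0 := by
      obtain ⟨c, hc⟩ := Function.ne_iff.mp hv'0
      intro h
      apply hc
      rw [← hvcast c, h]; rfl
    refine ⟨v, hvsupp, hvne, ?_, hvcast⟩
    ext i
    have hsum : (M *ᵥ v) i = ∑ b : Fin n, M i b * v b := by
      simp [mulVec, dotProduct]
    have hzero : ∀ b : Fin n, K ≤ (b:ℕ) → M i b * v b = 0 := by
      intro b hb; rw [hvsupp b hb, mul_zero]
    rw [hsum, sum_split hKn.le _ hzero]
    by_cases hi : (i:ℕ) < K
    · have hicast : Fin.castLE hKn.le ⟨(i:ℕ), hi⟩ = i := Fin.ext (by simp)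
      have h1 : ∑ c : Fin K, M i (Fin.castLE hKn.le c) * v (Fin.castLE hKn.le c)
          = ((M.submatrix (Fin.castLE hKn.le) (Fin.castLE hKn.le)) *ᵥ v') ⟨(i:ℕ), hi⟩ := by
        simp only [mulVec, dotProduct, submatrix_apply, hicast]
        apply Finset.sum_congr rfl
        intro c _
        rw [hvcast c]
      rw [h1, hv']
      rfl
    · have h1 : ∀ c : Fin K, M i (Fin.castLE hKn.le c) * v (Fin.castLE hKn.le c) = 0 := by
        intro c
        rw [(hcross (Fin.castLE hKn.le c) i c.isLt (le_of_not_gt hi)).2, zero_mul]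
      rw [Finset.sum_eq_zero (fun c _ => h1 c)]
      rfl
  have hM1sq : (M.submatrix (Fin.castLE hKn.le) (Fin.castLE hKn.le))
        * (M.submatrix (Fin.castLE hKn.le) (Fin.castLE hKn.le))
      = diagonal (fun c : Fin K => lam (Fin.castLE hKn.le c))
        * (M.submatrix (Fin.castLE hKn.le) (Fin.castLE hKn.le)) := by
    ext c c'
    have h1 : ((M.submatrix (Fin.castLE hKn.le) (Fin.castLE hKn.le))
          * (M.submatrix (Fin.castLE hKn.le) (Fin.castLE hKn.le))) c c'
        = ∑ c'' : Fin K, M (Fin.castLE hKn.le c) (Fin.castLE hKn.le c'')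
            * M (Fin.castLE hKn.le c'') (Fin.castLE hKn.le c') := by
      simp [mul_apply, submatrix_apply]
    have hzero : ∀ b : Fin n, K ≤ (b:ℕ) →
        M (Fin.castLE hKn.le c) b * M b (Fin.castLE hKn.le c') = 0 := by
      intro b hb
      rw [(hcross (Fin.castLE hKn.le c) b c.isLt hb).1, zero_mul]
    have h2 : (M*M) (Fin.castLE hKn.le c) (Fin.castLE hKn.le c')
        = ∑ b : Fin n, M (Fin.castLE hKn.le c) b * M b (Fin.castLE hKn.le c') := by
      simp [mul_apply]
    rw [h1, ← sum_split hKn.le _ hzero, ← h2, hMM, Matrix.diagonal_mul,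
      Matrix.diagonal_mul]
    rw [submatrix_apply]
  have hM1det : (M.submatrix (Fin.castLE hKn.le) (Fin.castLE hKn.le)).det ≠ 0 →
      M.submatrix (Fin.castLE hKn.le) (Fin.castLE hKn.le)
        = diagonal (fun c : Fin K => lam (Fin.castLE hKn.le c)) := by
    intro hdet
    have hM1inv := (M.submatrix (Fin.castLE hKn.le) (Fin.castLE hKn.le)).invertibleOfIsUnitDet
      (Ne.isUnit hdet)
    calc M.submatrix (Fin.castLE hKn.le) (Fin.castLE hKn.le)
        = (M.submatrix (Fin.castLE hKn.le) (Fin.castLE hKn.le)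
            * M.submatrix (Fin.castLE hKn.le) (Fin.castLE hKn.le))
          * ⅟(M.submatrix (Fin.castLE hKn.le) (Fin.castLE hKn.le)) := by
          rw [Matrix.mul_assoc, mul_invOf_self, Matrix.mul_one]
    _ = (diagonal (fun c : Fin K => lam (Fin.castLE hKn.le c))
          * M.submatrix (Fin.castLE hKn.le) (Fin.castLE hKn.le))
          * ⅟(M.submatrix (Fin.castLE hKn.le) (Fin.castLE hKn.le)) := by rw [hM1sq]
    _ = diagonal (fun c : Fin K => lam (Fin.castLE hKn.le c)) := by
          rw [Matrix.mul_assoc, mul_invOf_self, Matrix.mul_one]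
  -- the bottom diagonal of M vanishes
  have hdiag2 : ∀ j : Fin n, K ≤ (j:ℕ) → M j j = 0 := by
    by_contra hcon
    push_neg at hcon
    obtain ⟨j₀, hj₀K, hMj₀⟩ := hcon
    by_cases hdet : (M.submatrix (Fin.castLE hKn.le) (Fin.castLE hKn.le)).det = 0
    · obtain ⟨v', hv'0, hv'⟩ := Matrix.exists_mulVec_eq_zero_iff.mpr hdet
      obtain ⟨v, hvsupp, hvne, hMv, hvcast⟩ := hpad v' hv'0 hv'
      exact contra_top j₀ hj₀K hMj₀ v hvsupp hvne (hMvec v hMv)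
    · -- top block is the diagonal of eigenvalues; then K+1 independent columns: contradiction
      have hM1eq := hM1det hdet
      -- the K+1 vectors
      have hnli : ¬ LinearIndependent ℝ
          (Fin.snoc (fun c : Fin K => (fun k => Z (Fin.castLE hKn.le c) k))
            (fun k => Z j₀ k) : Fin (K+1) → (Fin K → ℝ)) := by
        intro hli
        have hcard := hli.fintype_card_le_finrank
        rw [Module.finrank_fintype_fun_eq_card] at hcard
        simp [Fintype.card_fin] at hcard
      rw [Fintype.not_linearIndependent_iff] at hnli
      obtain ⟨g, hg, a, hga⟩ := hnli
      have happ : ∑ b : Fin (K+1), g b • (Z *ᵥ ((Fin.snoc (fun c : Fin K => (fun k => Z (Fin.castLE hKn.le c) k))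
            (fun k => Z j₀ k) : Fin (K+1) → (Fin K → ℝ)) b)) = 0 := by
        have h3 := congrArg Z.mulVecLin hg
        simpa [map_sum, _root_.map_smul] using h3
      have hZxs : ∀ c : Fin K, Z *ᵥ (fun k => Z (Fin.castLE hKn.le c) k)
          = fun i => M i (Fin.castLE hKn.le c) := by
        intro c; ext i; rw [hMentry]; simp [mulVec, dotProduct]
      have hZx' : Z *ᵥ (fun k => Z j₀ k) = fun i => M i j₀ := by
        ext i; rw [hMentry]; simp [mulVec, dotProduct]
      rw [Fin.sum_univ_castSucc] at happ
      simp only [Fin.snoc_castSucc, Fin.snoc_last, hZxs, hZx'] at happ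
      have hgc : ∀ c : Fin K, g (Fin.castSucc c) = 0 := by
        intro c
        have h6 := congrFun happ (Fin.castLE hKn.le c)
        simp only [Pi.add_apply, Finset.sum_apply, Pi.smul_apply, smul_eq_mul,
          Pi.zero_apply] at h6
        have hMcj : M (Fin.castLE hKn.le c) j₀ = 0 :=
          (hcross (Fin.castLE hKn.le c) j₀ c.isLt hj₀K).1
        rw [hMcj, mul_zero, add_zero] at h6
        have h7 : ∀ c' : Fin K,
            g (Fin.castSucc c') * M (Fin.castLE hKn.le c) (Fin.castLE hKn.le c')
            = g (Fin.castSucc c') * (if c = c' then lam (Fin.castLE hKn.le c) else 0) := by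
          intro c'
          have := congrFun (congrFun hM1eq c) c'
          rw [submatrix_apply] at this
          rw [this, diagonal_apply]
        rw [Finset.sum_congr rfl (fun c' _ => h7 c')] at h6
        simp only [mul_ite, mul_zero, Finset.sum_ite_eq, Finset.mem_univ, if_true] at h6
        have hlpos := hpos (Fin.castLE hKn.le c) c.isLt
        rcases mul_eq_zero.mp h6 with h | h
        · exact h
        · exact absurd h (ne_of_gt hlpos)
      have hglast : g (Fin.last K) = 0 := by
        have h6 := congrFun happ j₀
        simp only [Pi.add_apply, Finset.sum_apply, Pi.smul_apply, smul_eq_mul,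
          Pi.zero_apply] at h6
        have h7 : ∀ c' : Fin K, g (Fin.castSucc c') * M j₀ (Fin.castLE hKn.le c') = 0 := by
          intro c'; rw [hgc c', zero_mul]
        rw [Finset.sum_congr rfl (fun c' _ => h7 c'), Finset.sum_const_zero, zero_add] at h6
        rcases mul_eq_zero.mp h6 with h | h
        · exact h
        · exact absurd h hMj₀
      apply hga
      cases a using Fin.lastCases with
      | last => exact hglast
      | cast c => exact hgc c
  have hZrow : ∀ j : Fin n, K ≤ (j:ℕ) → ∀ k : Fin K, Z j k = 0 := by
    intro j hj k
    have h1 := hdiag2 j hj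
    rw [hMentry] at h1
    have h2 := (Finset.sum_eq_zero_iff_of_nonneg
      (fun k _ => mul_self_nonneg (Z j k))).mp h1 k (Finset.mem_univ k)
    exact mul_self_eq_zero.mp h2
  have hM1eq2 : M.submatrix (Fin.castLE hKn.le) (Fin.castLE hKn.le)
      = diagonal (fun c : Fin K => lam (Fin.castLE hKn.le c)) := by
    by_cases hdet : (M.submatrix (Fin.castLE hKn.le) (Fin.castLE hKn.le)).det = 0
    · exfalso
      obtain ⟨v', hv'0, hv'⟩ := Matrix.exists_mulVec_eq_zero_iff.mpr hdet
      obtain ⟨v, hvsupp, hvne, hMv, hvcast⟩ := hpad v' hv'0 hv'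
      have hvZ := hMvec v hMv
      have hZ1tv : (Z.submatrix (Fin.castLE hKn.le) id)ᵀ *ᵥ v' = 0 := by
        ext k
        have h1 : ((Z.submatrix (Fin.castLE hKn.le) id)ᵀ *ᵥ v') k
            = ∑ c : Fin K, Z (Fin.castLE hKn.le c) k * v' c := by
          simp [mulVec, dotProduct, transpose_apply, submatrix_apply]
        have h2 : (Zᵀ *ᵥ v) k = ∑ i : Fin n, Z i k * v i := by
          simp [mulVec, dotProduct, transpose_apply]
        have hzero : ∀ b : Fin n, K ≤ (b:ℕ) → Z b k * v b = 0 := by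
          intro b hb; rw [hvsupp b hb, mul_zero]
        have h3 : ∑ i : Fin n, Z i k * v i
            = ∑ c : Fin K, Z (Fin.castLE hKn.le c) k * v (Fin.castLE hKn.le c) :=
          sum_split hKn.le _ hzero
        have h4 : ∑ c : Fin K, Z (Fin.castLE hKn.le c) k * v' c
            = ∑ c : Fin K, Z (Fin.castLE hKn.le c) k * v (Fin.castLE hKn.le c) := by
          apply Finset.sum_congr rfl
          intro c _
          rw [hvcast c]
        rw [h1, h4, ← h3, ← h2, hvZ]
      have hdetZ1T : ((Z.submatrix (Fin.castLE hKn.le) id)ᵀ).det = 0 :=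
        Matrix.exists_mulVec_eq_zero_iff.mp ⟨v', hv'0, hZ1tv⟩
      have hdetZ1 : (Z.submatrix (Fin.castLE hKn.le) id).det = 0 := by
        rw [← Matrix.det_transpose]; exact hdetZ1T
      obtain ⟨u, hu0, hu⟩ := Matrix.exists_mulVec_eq_zero_iff.mpr hdetZ1
      have hZu : Z *ᵥ u = 0 := by
        ext i
        by_cases hi : (i:ℕ) < K
        · have hicast : Fin.castLE hKn.le ⟨(i:ℕ), hi⟩ = i := Fin.ext (by simp)
          have h5 := congrFun hu ⟨(i:ℕ), hi⟩
          simpa [mulVec, dotProduct, submatrix_apply, hicast] using h5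
        · have h5 : ∀ k, Z i k = 0 := hZrow i (le_of_not_gt hi)
          simp [mulVec, dotProduct, h5]
      exact hu0 (hZinj u hZu)
    · exact hM1det hdet
  -- final assembly
  have hZ1Z1 : (Z.submatrix (Fin.castLE hKn.le) id) * (Z.submatrix (Fin.castLE hKn.le) id)ᵀ
      = diagonal (fun c : Fin K => lam (Fin.castLE hKn.le c)) := by
    rw [← hM1eq2]
    ext c c'
    rw [submatrix_apply, hMentry]
    simp [mul_apply, submatrix_apply, transpose_apply]
  have hsqpos : ∀ c : Fin K, 0 < Real.sqrt (lam (Fin.castLE hKn.le c)) :=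
    fun c => Real.sqrt_pos.mpr (hpos _ c.isLt)
  have hsqsq : ∀ c : Fin K, Real.sqrt (lam (Fin.castLE hKn.le c))
      * Real.sqrt (lam (Fin.castLE hKn.le c)) = lam (Fin.castLE hKn.le c) :=
    fun c => Real.mul_self_sqrt (hpos _ c.isLt).le
  have hQQT : (diagonal (fun c : Fin K => (Real.sqrt (lam (Fin.castLE hKn.le c)))⁻¹)
        * (Z.submatrix (Fin.castLE hKn.le) id))
      * ((diagonal (fun c : Fin K => (Real.sqrt (lam (Fin.castLE hKn.le c)))⁻¹)
        * (Z.submatrix (Fin.castLE hKn.le) id)))ᵀ = 1 := by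
    rw [transpose_mul, diagonal_transpose]
    have h1 : (diagonal (fun c : Fin K => (Real.sqrt (lam (Fin.castLE hKn.le c)))⁻¹)
          * (Z.submatrix (Fin.castLE hKn.le) id))
        * ((Z.submatrix (Fin.castLE hKn.le) id)ᵀ
          * diagonal (fun c : Fin K => (Real.sqrt (lam (Fin.castLE hKn.le c)))⁻¹))
        = diagonal (fun c : Fin K => (Real.sqrt (lam (Fin.castLE hKn.le c)))⁻¹)
          * ((Z.submatrix (Fin.castLE hKn.le) id) * (Z.submatrix (Fin.castLE hKn.le) id)ᵀ)
          * diagonal (fun c : Fin K => (Real.sqrt (lam (Fin.castLE hKn.le c)))⁻¹) := by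
      simp only [Matrix.mul_assoc]
    rw [h1, hZ1Z1, diagonal_mul_diagonal, diagonal_mul_diagonal]
    have h2 : (fun c : Fin K => (Real.sqrt (lam (Fin.castLE hKn.le c)))⁻¹
        * lam (Fin.castLE hKn.le c) * (Real.sqrt (lam (Fin.castLE hKn.le c)))⁻¹)
        = fun _ => (1:ℝ) := by
      funext c
      have hne := (hsqpos c).ne'
      rw [mul_comm _ (lam _), mul_assoc, ← mul_inv, hsqsq c, mul_inv_cancel₀ (hpos _ c.isLt).ne']
    rw [h2, Matrix.diagonal_one]
  have hYU : Y = Ufull.submatrix id (Fin.castLE hKn.le) * (Z.submatrix (Fin.castLE hKn.le) id) := by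
    rw [← hYZ]
    ext a k
    have h1 : (Ufull * Z) a k = ∑ b : Fin n, Ufull a b * Z b k := by simp [mul_apply]
    have hzero : ∀ b : Fin n, K ≤ (b:ℕ) → Ufull a b * Z b k = 0 := by
      intro b hb; rw [hZrow b hb k, mul_zero]
    rw [h1, sum_split hKn.le _ hzero]
    simp [mul_apply, submatrix_apply]
  refine ⟨diagonal (fun c : Fin K => (Real.sqrt (lam (Fin.castLE hKn.le c)))⁻¹)
      * (Z.submatrix (Fin.castLE hKn.le) id), mul_eq_one_comm.mp hQQT, hQQT, ?_⟩
  have hdiagQ : diagonal (fun c : Fin K => Real.sqrt (lam (Fin.castLE hKn.le c)))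
      * (diagonal (fun c : Fin K => (Real.sqrt (lam (Fin.castLE hKn.le c)))⁻¹)
        * (Z.submatrix (Fin.castLE hKn.le) id)) = Z.submatrix (Fin.castLE hKn.le) id := by
    rw [← Matrix.mul_assoc, diagonal_mul_diagonal]
    have h2 : (fun c : Fin K => Real.sqrt (lam (Fin.castLE hKn.le c))
        * (Real.sqrt (lam (Fin.castLE hKn.le c)))⁻¹) = fun _ => (1:ℝ) := by
      funext c
      exact mul_inv_cancel₀ (hsqpos c).ne'
    rw [h2, Matrix.diagonal_one, Matrix.one_mul]
  rw [Matrix.mul_assoc, hdiagQ]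
  exact hYU
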